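/- arXiv:1712.09038 — 3 statements merged into one kernel-verified Lean document; each statement's English description precedes it below -/
import Mathlib

section
/- Assume the lower decoupling condition: there exist c > 0 and k ∈ ℕ₀ such that for all t ∈ ℕ, all u ∈ Ω_t and all nonempty v ∈ Ω_fin, ∑_{ξ : τ_t − k ≤ |ξ| ≤ τ_t} P(uξv) ≥ e^{−c} P(u) P(v). Then the shift-invariant measure P is ergodic with respect to the left shift φ on Ω = A^ℕ. -/
open MeasureTheory

/-- The left shift on the one-sided shift space `A^ℕ`. -/
def shiftMap {A : Type*} (ω : ℕ → A) : ℕ → A := fun n => ω (n + 1)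

/-- The cylinder set of a finite word. -/
def cyl {A : Type*} (w : List A) : Set (ℕ → A) :=
  {ω | ∀ i : Fin w.length, ω i = w.get i}

namespace Stmt7Aux

open Set

variable {A : Type*} [Fintype A] [MeasurableSpace A] [MeasurableSingletonClass A]

lemma shift_iter_apply (s : ℕ) (ω : ℕ → A) (n : ℕ) : shiftMap^[s] ω n = ω (n + s) := by
  induction s generalizing ω n with
  | zero => simp
  | succ s ih =>
    rw [Function.iterate_succ_apply, ih]
    show ω (n + s + 1) = ω (n + (s + 1))
    congr 1 <;> omega

lemma measurable_shiftMap : Measurable (shiftMap (A := A)) :=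
  measurable_pi_lambda _ fun n => measurable_pi_apply (n + 1)

lemma measurableSet_cyl (w : List A) : MeasurableSet (cyl w) := by
  have : cyl w = ⋂ i : Fin w.length, (fun ω : ℕ → A => ω i) ⁻¹' {w.get i} := by
    ext ω; simp [cyl]
  rw [this]
  exact MeasurableSet.iInter fun i => (measurable_pi_apply _) (measurableSet_singleton _)

lemma mem_cyl_ofFn {n : ℕ} (g : Fin n → A) (ω : ℕ → A) :
    ω ∈ cyl (List.ofFn g) ↔ ∀ i : Fin n, ω i = g i := by
  simp only [cyl, mem_setOf_eq, List.get_ofFn, Fin.forall_iff, List.length_ofFn]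
  constructor
  · intro h i hi
    simpa using h i hi
  · intro h i hi
    simpa using h i hi

lemma cyl_ofFn_disjoint {n : ℕ} {g g' : Fin n → A} (h : g ≠ g') :
    Disjoint (cyl (List.ofFn g)) (cyl (List.ofFn g')) := by
  rw [Set.disjoint_left]
  intro ω hg hg'
  apply h
  funext i
  rw [← (mem_cyl_ofFn g ω).1 hg i, ← (mem_cyl_ofFn g' ω).1 hg' i]

lemma cyl_append (x y : List A) :
    cyl (x ++ y) = cyl x ∩ shiftMap^[x.length] ⁻¹' cyl y := by
  ext ω
  simp only [cyl, mem_inter_iff, mem_setOf_eq, mem_preimage, Fin.forall_iff,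
    List.length_append, List.get_eq_getElem, shift_iter_apply]
  constructor
  · intro h
    refine ⟨fun i hi => ?_, fun j hj => ?_⟩
    · rw [h i (by omega)]
      exact List.getElem_append_left hi
    · rw [h (j + x.length) (by omega)]
      rw [List.getElem_append_right (by omega)]
      congr 1
      omega
  · rintro ⟨h1, h2⟩ i hi
    by_cases hix : i < x.length
    · rw [h1 i hix]; exact (List.getElem_append_left hix).symm
    · have hi' : i - x.length < y.length := by omega
      have := h2 (i - x.length) hi'
      rw [show i - x.length + x.length = i by omega] at this
      rw [this, List.getElem_append_right (by omega)]

set_option linter.unusedSectionVars false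

variable (P : Measure (ℕ → A)) [IsProbabilityMeasure P]

/-- additivity over a disjoint family of cylinders intersected with a fixed set -/
lemma meas_biUnion_inter (n : ℕ) (F : Finset (Fin n → A)) (Y : Set (ℕ → A))
    (hY : MeasurableSet Y) :
    P ((⋃ g ∈ F, cyl (List.ofFn g)) ∩ Y) = ∑ g ∈ F, P (cyl (List.ofFn g) ∩ Y) := by
  rw [Set.iUnion₂_inter]
  rw [measure_biUnion_finset]
  · intro g _ g' _ hne
    exact (cyl_ofFn_disjoint hne).mono Set.inter_subset_left Set.inter_subset_left
  · exact fun g _ => (measurableSet_cyl _).inter hY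

lemma meas_inter_preimage_biUnion (n s : ℕ) (F : Finset (Fin n → A)) (X : Set (ℕ → A))
    (hX : MeasurableSet X) :
    P (X ∩ shiftMap^[s] ⁻¹' (⋃ g ∈ F, cyl (List.ofFn g)))
      = ∑ g ∈ F, P (X ∩ shiftMap^[s] ⁻¹' cyl (List.ofFn g)) := by
  rw [Set.preimage_iUnion₂, Set.inter_iUnion₂]
  rw [measure_biUnion_finset]
  · intro g _ g' _ hne
    exact (((cyl_ofFn_disjoint hne).preimage _).mono Set.inter_subset_right
      Set.inter_subset_right)
  · exact fun g _ => hX.inter ((measurable_shiftMap.iterate s) (measurableSet_cyl _))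

/-- partition of a set along the fibers of a shifted finite window -/
lemma meas_eq_sum_fiber (s i : ℕ) (X : Set (ℕ → A)) (hX : MeasurableSet X) :
    P X = ∑ g : Fin i → A, P (X ∩ shiftMap^[s] ⁻¹' cyl (List.ofFn g)) := by
  have : X = X ∩ shiftMap^[s] ⁻¹' (⋃ g ∈ (Finset.univ : Finset (Fin i → A)),
      cyl (List.ofFn g)) := by
    have hu : (⋃ g ∈ (Finset.univ : Finset (Fin i → A)), cyl (List.ofFn g)) = Set.univ := by
      ext ω
      simp only [Set.mem_iUnion, Finset.mem_univ, exists_prop, true_and, Set.mem_univ, iff_true]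
      exact ⟨fun j => ω j, (mem_cyl_ofFn _ ω).2 fun j => rfl⟩
    rw [hu]; simp
  conv_lhs => rw [this]
  exact meas_inter_preimage_biUnion P i s Finset.univ X hX

/-- summing the decoupling inequality over all middle words -/
lemma sum_cyl_insert (u v : List A) (i : ℕ) :
    ∑ g : Fin i → A, P (cyl (u ++ List.ofFn g ++ v))
      = P (cyl u ∩ shiftMap^[u.length + i] ⁻¹' cyl v) := by
  have key : ∀ g : Fin i → A, cyl (u ++ List.ofFn g ++ v) =
      (cyl u ∩ shiftMap^[u.length + i] ⁻¹' cyl v) ∩ shiftMap^[u.length] ⁻¹' cyl (List.ofFn g) := by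
    intro g
    rw [cyl_append (u ++ List.ofFn g) v, cyl_append u (List.ofFn g),
      List.length_append, List.length_ofFn]
    ext ω
    simp only [Set.mem_inter_iff, Set.mem_preimage]
    tauto
  rw [Finset.sum_congr rfl fun g _ => by rw [key g]]
  exact (meas_eq_sum_fiber P u.length i _
    ((measurableSet_cyl u).inter ((measurable_shiftMap.iterate _) (measurableSet_cyl v)))).symm


/-- every measurable cylinder event is a finite union of word cylinders of any
sufficiently large common length -/
lemma rep_measurableCylinder (t : Set (ℕ → A))
    (ht : t ∈ measurableCylinders (fun _ : ℕ => A)) (N : ℕ) :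
    ∃ n, N ≤ n ∧ ∃ F : Finset (Fin n → A), t = ⋃ g ∈ F, cyl (List.ofFn g) := by
  classical
  rw [mem_measurableCylinders] at ht
  obtain ⟨s, S, -, rfl⟩ := ht
  set n := max N (s.sup id + 1) with hn
  have hsn : ∀ i ∈ s, (i : ℕ) < n :=
    fun i hi => lt_of_lt_of_le (Nat.lt_succ_of_le (Finset.le_sup (f := id) hi))
      (le_max_right _ _)
  refine ⟨n, le_max_left _ _,
    Finset.univ.filter (fun g : Fin n → A => (fun i : s => g ⟨i.1, hsn i.1 i.2⟩) ∈ S), ?_⟩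
  ext ω
  simp only [mem_cylinder, Set.mem_iUnion, Finset.mem_filter, Finset.mem_univ, true_and,
    exists_prop]
  constructor
  · intro h
    refine ⟨fun j => ω j.1, h, (mem_cyl_ofFn _ ω).2 fun j => rfl⟩
  · rintro ⟨g, hg, hmem⟩
    have : Finset.restrict s ω = fun i : s => g ⟨i.1, hsn i.1 i.2⟩ := by
      funext i
      exact (mem_cyl_ofFn g ω).1 hmem ⟨i.1, hsn i.1 i.2⟩
    rw [this]
    exact hg


lemma decoupled_unions (c : ℝ) (k : ℕ) (τ : ℕ → ℕ)
    (hdec : ∀ (t : ℕ) (u v : List A), u.length = t → v ≠ [] →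
      Real.exp (-c) * ((P (cyl u)).toReal * (P (cyl v)).toReal) ≤
        ∑ i ∈ Finset.Icc (τ t - k) (τ t), ∑ g : Fin i → A,
          (P (cyl (u ++ List.ofFn g ++ v))).toReal)
    (n₁ n₂ : ℕ) (hn₂ : 1 ≤ n₂) (F₁ : Finset (Fin n₁ → A)) (F₂ : Finset (Fin n₂ → A)) :
    Real.exp (-c) * ((P (⋃ g ∈ F₁, cyl (List.ofFn g))).toReal *
        (P (⋃ g ∈ F₂, cyl (List.ofFn g))).toReal)
      ≤ ∑ i ∈ Finset.Icc (τ n₁ - k) (τ n₁),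
          (P ((⋃ g ∈ F₁, cyl (List.ofFn g)) ∩
            shiftMap^[n₁ + i] ⁻¹' (⋃ g ∈ F₂, cyl (List.ofFn g)))).toReal := by
  set U := ⋃ g ∈ F₁, cyl (List.ofFn g) with hU
  set V := ⋃ g ∈ F₂, cyl (List.ofFn g) with hV
  have hVmeas : MeasurableSet V := by
    exact Set.Finite.measurableSet_biUnion F₂.finite_toSet fun g _ => measurableSet_cyl _
  have h1 : ∀ u : Fin n₁ → A, ∀ v : Fin n₂ → A,
      Real.exp (-c) * ((P (cyl (List.ofFn u))).toReal * (P (cyl (List.ofFn v))).toReal) ≤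
        ∑ i ∈ Finset.Icc (τ n₁ - k) (τ n₁),
          (P (cyl (List.ofFn u) ∩ shiftMap^[n₁ + i] ⁻¹' cyl (List.ofFn v))).toReal := by
    intro u v
    have hne : List.ofFn v ≠ [] := by
      simp only [ne_eq, List.ofFn_eq_nil_iff]
      omega
    have := hdec n₁ (List.ofFn u) (List.ofFn v) List.length_ofFn hne
    refine this.trans (le_of_eq (Finset.sum_congr rfl fun i _ => ?_))
    rw [← ENNReal.toReal_sum (fun g _ => measure_ne_top P _)]
    rw [sum_cyl_insert, List.length_ofFn]
  have hPU : (P U).toReal = ∑ u ∈ F₁, (P (cyl (List.ofFn u))).toReal := by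
    rw [← ENNReal.toReal_sum (fun _ _ => measure_ne_top P _)]
    congr 1
    have := meas_biUnion_inter P n₁ F₁ Set.univ MeasurableSet.univ
    simpa using this
  have hPV : (P V).toReal = ∑ v ∈ F₂, (P (cyl (List.ofFn v))).toReal := by
    rw [← ENNReal.toReal_sum (fun _ _ => measure_ne_top P _)]
    congr 1
    have := meas_biUnion_inter P n₂ F₂ Set.univ MeasurableSet.univ
    simpa using this
  have hterm : ∀ i : ℕ, (P (U ∩ shiftMap^[n₁ + i] ⁻¹' V)).toReal
      = ∑ u ∈ F₁, ∑ v ∈ F₂,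
          (P (cyl (List.ofFn u) ∩ shiftMap^[n₁ + i] ⁻¹' cyl (List.ofFn v))).toReal := by
    intro i
    have e1 : P (U ∩ shiftMap^[n₁ + i] ⁻¹' V)
        = ∑ u ∈ F₁, P (cyl (List.ofFn u) ∩ shiftMap^[n₁ + i] ⁻¹' V) :=
      meas_biUnion_inter P n₁ F₁ _ ((measurable_shiftMap.iterate _) hVmeas)
    rw [e1, ENNReal.toReal_sum (fun _ _ => measure_ne_top P _)]
    refine Finset.sum_congr rfl fun u _ => ?_
    rw [meas_inter_preimage_biUnion P n₂ (n₁ + i) F₂ _ (measurableSet_cyl _),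
      ENNReal.toReal_sum (fun _ _ => measure_ne_top P _)]
  calc Real.exp (-c) * ((P U).toReal * (P V).toReal)
      = ∑ u ∈ F₁, ∑ v ∈ F₂, Real.exp (-c) *
          ((P (cyl (List.ofFn u))).toReal * (P (cyl (List.ofFn v))).toReal) := by
        rw [hPU, hPV, Finset.sum_mul_sum, Finset.mul_sum]
        exact Finset.sum_congr rfl fun u _ => by rw [Finset.mul_sum]
    _ ≤ ∑ u ∈ F₁, ∑ v ∈ F₂, ∑ i ∈ Finset.Icc (τ n₁ - k) (τ n₁),
          (P (cyl (List.ofFn u) ∩ shiftMap^[n₁ + i] ⁻¹' cyl (List.ofFn v))).toReal :=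
        Finset.sum_le_sum fun u _ => Finset.sum_le_sum fun v _ => h1 u v
    _ = ∑ i ∈ Finset.Icc (τ n₁ - k) (τ n₁), ∑ u ∈ F₁, ∑ v ∈ F₂,
          (P (cyl (List.ofFn u) ∩ shiftMap^[n₁ + i] ⁻¹' cyl (List.ofFn v))).toReal := by
        exact (Finset.sum_congr rfl fun u _ => Finset.sum_comm).trans Finset.sum_comm
    _ = _ := Finset.sum_congr rfl fun i _ => (hterm i).symm


lemma inv_iter (hinv : ∀ S : Set (ℕ → A), MeasurableSet S → P (shiftMap ⁻¹' S) = P S)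
    (s : ℕ) {S : Set (ℕ → A)} (hS : MeasurableSet S) :
    P (shiftMap^[s] ⁻¹' S) = P S := by
  induction s with
  | zero => simp
  | succ s ih =>
    rw [Function.iterate_succ, Set.preimage_comp, hinv _ ((measurable_shiftMap.iterate s) hS)]
    exact ih

lemma null_iter (hinv : ∀ S : Set (ℕ → A), MeasurableSet S → P (shiftMap ⁻¹' S) = P S)
    {B : Set (ℕ → A)} (hB : MeasurableSet B)
    (h0 : P (symmDiff B (shiftMap ⁻¹' B)) = 0) (s : ℕ) :
    P (symmDiff B (shiftMap^[s] ⁻¹' B)) = 0 := by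
  induction s with
  | zero => simp
  | succ s ih =>
    have hsub : symmDiff B (shiftMap^[s+1] ⁻¹' B) ⊆
        symmDiff B (shiftMap^[s] ⁻¹' B) ∪ shiftMap^[s] ⁻¹' (symmDiff B (shiftMap ⁻¹' B)) := by
      have h1 : shiftMap^[s+1] ⁻¹' B = shiftMap^[s] ⁻¹' (shiftMap ⁻¹' B) := by
        rw [Function.iterate_succ', Set.preimage_comp]
      rw [h1, Set.preimage_symmDiff]
      exact symmDiff_triangle _ _ _
    apply measure_mono_null hsub
    apply measure_union_null ih
    rw [inv_iter P hinv s (hB.symmDiff (measurable_shiftMap hB))]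
    exact h0

end Stmt7Aux

open Stmt7Aux in
theorem stmt_7 {A : Type*} [Fintype A] [MeasurableSpace A] [MeasurableSingletonClass A]
    (P : Measure (ℕ → A)) [IsProbabilityMeasure P]
    (hinv : ∀ S : Set (ℕ → A), MeasurableSet S → P (shiftMap ⁻¹' S) = P S)
    (c : ℝ) (hc : 0 < c) (k : ℕ) (τ : ℕ → ℕ)
    (hdec : ∀ (t : ℕ) (u v : List A), u.length = t → v ≠ [] →
      Real.exp (-c) * ((P (cyl u)).toReal * (P (cyl v)).toReal) ≤
        ∑ i ∈ Finset.Icc (τ t - k) (τ t), ∑ g : Fin i → A,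
          (P (cyl (u ++ List.ofFn g ++ v))).toReal) :
    ∀ B : Set (ℕ → A), MeasurableSet B → P (symmDiff B (shiftMap ⁻¹' B)) = 0 →
      P B = 0 ∨ P B = 1 := by
  intro B hB h0
  by_contra hcon
  push_neg at hcon
  obtain ⟨hB0, hB1⟩ := hcon
  classical
  set a := (P B).toReal with ha
  set b := (P Bᶜ).toReal with hb
  have ha0 : 0 < a := ENNReal.toReal_pos hB0 (measure_ne_top P B)
  have hb0 : 0 < b :=
    ENNReal.toReal_pos (fun h => hB1 ((prob_compl_eq_zero_iff hB).1 h)) (measure_ne_top _ _)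
  set C := Real.exp (-c) with hCdef
  have hC : 0 < C := Real.exp_pos _
  set ε := min (min (a/2) (b/2)) (C * a * b / (16 * (k+1))) with hεdef
  have hεpos : 0 < ε := by
    apply lt_min (lt_min (by linarith) (by linarith))
    positivity
  have hεa : ε ≤ a/2 := (min_le_left _ _).trans (min_le_left _ _)
  have hεb : ε ≤ b/2 := (min_le_left _ _).trans (min_le_right _ _)
  have hεc : ε ≤ C * a * b / (16 * (k+1)) := min_le_right _ _
  -- measure-dense approximation by cylinder events
  have halg : IsSetAlgebra (measurableCylinders (fun _ : ℕ => A)) :=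
    ⟨empty_mem_measurableCylinders _, fun _ hs => compl_mem_measurableCylinders hs,
      fun _ _ hs ht => union_mem_measurableCylinders hs ht⟩
  have hdense := Measure.MeasureDense.of_generateFrom_isSetAlgebra_finite (μ := P) halg
    generateFrom_measurableCylinders.symm
  obtain ⟨S₁, hS₁mem, hS₁⟩ := hdense.approx B hB (measure_ne_top _ _) ε hεpos
  obtain ⟨S₂, hS₂mem, hS₂⟩ := hdense.approx Bᶜ hB.compl (measure_ne_top _ _) ε hεpos
  obtain ⟨n₁, -, F₁, rfl⟩ := rep_measurableCylinder S₁ hS₁mem 1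
  obtain ⟨n₂, hn₂, F₂, rfl⟩ := rep_measurableCylinder S₂ hS₂mem 1
  set U := ⋃ g ∈ F₁, cyl (List.ofFn g) with hUdef
  set V := ⋃ g ∈ F₂, cyl (List.ofFn g) with hVdef
  have hUmeas : MeasurableSet U :=
    Set.Finite.measurableSet_biUnion F₁.finite_toSet fun g _ => measurableSet_cyl _
  have hVmeas : MeasurableSet V :=
    Set.Finite.measurableSet_biUnion F₂.finite_toSet fun g _ => measurableSet_cyl _
  -- lower bounds for the approximations
  have lower : ∀ (W T : Set (ℕ → A)), MeasurableSet W →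
      P (symmDiff T W) < ENNReal.ofReal ε → (P T).toReal - ε ≤ (P W).toReal := by
    intro W T _ hTW
    have hsub : T ⊆ W ∪ symmDiff T W := by
      intro ω hω
      by_cases h : ω ∈ W
      · exact Or.inl h
      · exact Or.inr (Or.inl ⟨hω, h⟩)
    have h1 : P T ≤ P W + P (symmDiff T W) :=
      (measure_mono hsub).trans (measure_union_le _ _)
    have h2 : (P T).toReal ≤ (P W).toReal + (P (symmDiff T W)).toReal := by
      rw [← ENNReal.toReal_add (measure_ne_top _ _) (measure_ne_top _ _)]
      exact ENNReal.toReal_mono (by finiteness) h1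
    have h3 : (P (symmDiff T W)).toReal ≤ ε := by
      have := ENNReal.toReal_mono ENNReal.ofReal_ne_top hTW.le
      rwa [ENNReal.toReal_ofReal hεpos.le] at this
    linarith
  have hU1 : a - ε ≤ (P U).toReal := lower U B hUmeas hS₁
  have hV1 : b - ε ≤ (P V).toReal := lower V Bᶜ hVmeas hS₂
  -- upper bound on the correlation terms
  have hupper : ∀ s : ℕ, (P (U ∩ shiftMap^[s] ⁻¹' V)).toReal ≤ 2 * ε := by
    intro s
    have hsub : U ∩ shiftMap^[s] ⁻¹' V ⊆
        (symmDiff B U ∪ shiftMap^[s] ⁻¹' (symmDiff Bᶜ V)) ∪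
          symmDiff B (shiftMap^[s] ⁻¹' B) := by
      rintro ω ⟨hωU, hωV⟩
      simp only [Set.mem_union, Set.mem_preimage, Set.mem_symmDiff, Set.mem_compl_iff]
      by_cases h1 : ω ∈ B <;> by_cases h2 : shiftMap^[s] ω ∈ B <;> tauto
    have hle : P (U ∩ shiftMap^[s] ⁻¹' V) ≤
        P (symmDiff B U) + P (shiftMap^[s] ⁻¹' (symmDiff Bᶜ V)) +
          P (symmDiff B (shiftMap^[s] ⁻¹' B)) :=
      (measure_mono hsub).trans ((measure_union_le _ _).trans
        (add_le_add (measure_union_le _ _) le_rfl))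
    rw [inv_iter P hinv s (hB.compl.symmDiff hVmeas),
      null_iter P hinv hB h0 s, add_zero] at hle
    have hle2 : P (U ∩ shiftMap^[s] ⁻¹' V) ≤ ENNReal.ofReal ε + ENNReal.ofReal ε :=
      hle.trans (add_le_add hS₁.le hS₂.le)
    rw [← ENNReal.ofReal_add hεpos.le hεpos.le] at hle2
    have := ENNReal.toReal_mono ENNReal.ofReal_ne_top hle2
    rw [ENNReal.toReal_ofReal (by linarith)] at this
    linarith
  -- the decoupling inequality for the unions
  have hmain := decoupled_unions P c k τ hdec n₁ n₂ hn₂ F₁ F₂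
  rw [← hUdef, ← hVdef, ← hCdef] at hmain
  -- sum bound
  have hcard : ((Finset.Icc (τ n₁ - k) (τ n₁)).card : ℝ) ≤ (k : ℝ) + 1 := by
    rw [Nat.card_Icc]
    push_cast
    have : τ n₁ + 1 - (τ n₁ - k) ≤ k + 1 := by omega
    exact_mod_cast Nat.cast_le.mpr this
  have hsum : ∑ i ∈ Finset.Icc (τ n₁ - k) (τ n₁),
      (P (U ∩ shiftMap^[n₁ + i] ⁻¹' V)).toReal ≤ ((k : ℝ) + 1) * (2 * ε) := by
    calc ∑ i ∈ Finset.Icc (τ n₁ - k) (τ n₁), (P (U ∩ shiftMap^[n₁ + i] ⁻¹' V)).toReal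
        ≤ (Finset.Icc (τ n₁ - k) (τ n₁)).card • (2 * ε) :=
          Finset.sum_le_card_nsmul _ _ _ fun i _ => hupper (n₁ + i)
      _ = ((Finset.Icc (τ n₁ - k) (τ n₁)).card : ℝ) * (2 * ε) := by
          rw [nsmul_eq_mul]
      _ ≤ ((k : ℝ) + 1) * (2 * ε) :=
          mul_le_mul_of_nonneg_right hcard (by linarith)
  -- numeric contradiction
  have hK : (0 : ℝ) < (k : ℝ) + 1 := by positivity
  have hfinal : C * ((a - ε) * (b - ε)) ≤ ((k : ℝ) + 1) * (2 * ε) := by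
    refine le_trans ?_ (hmain.trans hsum)
    apply mul_le_mul_of_nonneg_left _ hC.le
    apply mul_le_mul hU1 hV1 (by linarith) (ENNReal.toReal_nonneg)
  have hεc' : ((k : ℝ) + 1) * (2 * ε) ≤ C * a * b / 8 := by
    have : ((k : ℝ) + 1) * (2 * ε) ≤ ((k : ℝ) + 1) * (2 * (C * a * b / (16 * ((k:ℝ)+1)))) := by
      apply mul_le_mul_of_nonneg_left _ hK.le
      apply mul_le_mul_of_nonneg_left _ (by norm_num)
      exact hεc
    refine this.trans (le_of_eq ?_)
    field_simp
    ring
  have hlow : C * a * b / 4 ≤ C * ((a - ε) * (b - ε)) := by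
    have h1 : a / 2 ≤ a - ε := by linarith
    have h2 : b / 2 ≤ b - ε := by linarith
    have := mul_le_mul h1 h2 (by linarith) (by linarith)
    calc C * a * b / 4 = C * ((a/2) * (b/2)) := by ring
      _ ≤ C * ((a - ε) * (b - ε)) := mul_le_mul_of_nonneg_left this hC.le
  nlinarith [mul_pos (mul_pos hC ha0) hb0]
end

section
/- Suppose for a shift-invariant probability measure P on Ω = A^ℕ there exists a constant C > 0 such that for any two Borel-measurable cylinder sets C₁, C₂ there exists t ∈ ℕ₀ with P(C₁ ∩ φ⁻ᵗ C₂) ≥ C · P(C₁) · P(C₂). Then P is ergodic. -/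
open MeasureTheory

/-- A cylinder set: a set determined by finitely many coordinates. -/
def IsCylinderSet {A : Type*} (S : Set (ℕ → A)) : Prop :=
  ∃ (r : ℕ) (W : Set (Fin r → A)), S = {ω | (fun i : Fin r => ω i) ∈ W}

lemma measurable_shiftMap {A : Type*} [MeasurableSpace A] :
    Measurable (shiftMap (A := A)) :=
  measurable_pi_lambda _ fun n => measurable_pi_apply (n + 1)

lemma isCylinderSet_of_mem {A : Type*} [MeasurableSpace A]
    {S : Set (ℕ → A)} (hS : S ∈ measurableCylinders (fun _ : ℕ => A)) :
    IsCylinderSet S := by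
  obtain ⟨s, T, -, rfl⟩ := (mem_measurableCylinders S).1 hS
  refine ⟨s.sup id + 1, {f : Fin (s.sup id + 1) → A |
    (fun i : s => f ⟨i.1, Nat.lt_succ_of_le (Finset.le_sup (f := id) i.2)⟩) ∈ T}, ?_⟩
  ext ω
  simp only [cylinder, Set.mem_preimage, Set.mem_setOf_eq, Finset.restrict]
  rfl

lemma isCylinderSet_compl {A : Type*} {S : Set (ℕ → A)} (hS : IsCylinderSet S) :
    IsCylinderSet Sᶜ := by
  obtain ⟨r, W, rfl⟩ := hS
  exact ⟨r, Wᶜ, rfl⟩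

theorem stmt_8 {A : Type*} [Fintype A] [MeasurableSpace A] [MeasurableSingletonClass A]
    (P : Measure (ℕ → A)) [IsProbabilityMeasure P]
    (hinv : ∀ S : Set (ℕ → A), MeasurableSet S → P (shiftMap ⁻¹' S) = P S)
    (C : ℝ) (hC : 0 < C)
    (hcorr : ∀ S₁ S₂ : Set (ℕ → A), IsCylinderSet S₁ → IsCylinderSet S₂ →
      ∃ t : ℕ, C * (P S₁).toReal * (P S₂).toReal ≤ (P (S₁ ∩ (shiftMap^[t]) ⁻¹' S₂)).toReal) :
    ∀ B : Set (ℕ → A), MeasurableSet B → P (symmDiff B (shiftMap ⁻¹' B)) = 0 →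
      P B = 0 ∨ P B = 1 := by
  intro B hB hBinv
  by_contra hcon
  push_neg at hcon
  obtain ⟨h0, h1⟩ := hcon
  -- iterated invariance of the measure
  have hinv_iter : ∀ (t : ℕ) (S : Set (ℕ → A)), MeasurableSet S →
      P ((shiftMap^[t]) ⁻¹' S) = P S := by
    intro t
    induction t with
    | zero => intro S _; simp
    | succ t ih =>
      intro S hS
      rw [Function.iterate_succ, Set.preimage_comp, hinv _ (measurable_shiftMap.iterate t hS)]
      exact ih S hS
  -- B is a.e. invariant under all iterates
  have hBiter : ∀ t : ℕ, P (symmDiff B ((shiftMap^[t]) ⁻¹' B)) = 0 := by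
    intro t
    induction t with
    | zero => simp
    | succ t ih =>
      have h1' : P (symmDiff ((shiftMap^[t]) ⁻¹' B) ((shiftMap^[t + 1]) ⁻¹' B)) = 0 := by
        rw [Function.iterate_succ', Set.preimage_comp, ← Set.preimage_symmDiff,
          hinv_iter t _ (hB.symmDiff (measurable_shiftMap hB))]
        exact hBinv
      have := measure_symmDiff_le (μ := P) B ((shiftMap^[t]) ⁻¹' B) ((shiftMap^[t + 1]) ⁻¹' B)
      rw [ih, h1', add_zero] at this
      exact le_antisymm this zero_le
  -- reals
  set a : ℝ := (P B).toReal with ha_def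
  have hPBlt : P B < 1 := lt_of_le_of_ne prob_le_one h1
  have hPBne : P B ≠ ⊤ := (lt_of_lt_of_le hPBlt le_top).ne
  have ha0 : 0 < a := ENNReal.toReal_pos h0 hPBne
  have ha1 : a < 1 := by
    rw [ha_def, ← ENNReal.toReal_one]
    exact ENNReal.toReal_strict_mono ENNReal.one_ne_top hPBlt
  set b : ℝ := 1 - a with hb_def
  have hb0 : 0 < b := by simp [hb_def, ha1]
  set ε : ℝ := min (min (a / 2) (b / 2)) (C * a * b / 16) with hε_def
  have hε0 : 0 < ε := by
    apply lt_min (lt_min (by linarith) (by linarith))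
    positivity
  have hεa : ε ≤ a / 2 := le_trans (min_le_left _ _) (min_le_left _ _)
  have hεb : ε ≤ b / 2 := le_trans (min_le_left _ _) (min_le_right _ _)
  have hεc : ε ≤ C * a * b / 16 := min_le_right _ _
  -- approximate B by a cylinder
  have hdense : P.MeasureDense (measurableCylinders (fun _ : ℕ => A)) := by
    refine Measure.MeasureDense.of_generateFrom_isSetAlgebra_finite P ?_ ?_
    · exact ⟨empty_mem_measurableCylinders _, fun s hs => compl_mem_measurableCylinders hs,
        fun s t hs ht => union_mem_measurableCylinders hs ht⟩
    · exact (generateFrom_measurableCylinders).symm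
  obtain ⟨S, hSmem, hSapprox⟩ := hdense.approx B hB hPBne ε hε0
  have hSmeas : MeasurableSet S := MeasurableSet.of_mem_measurableCylinders hSmem
  have hScyl : IsCylinderSet S := isCylinderSet_of_mem hSmem
  obtain ⟨t, hT⟩ := hcorr S Sᶜ hScyl (isCylinderSet_compl hScyl)
  -- P (B ∆ S) in reals
  set d : ℝ := (P (symmDiff B S)).toReal with hd_def
  have hsymm_ne : P (symmDiff B S) ≠ ⊤ := (lt_of_lt_of_le hSapprox le_top).ne
  have hd : d < ε := by
    rw [hd_def, ← ENNReal.toReal_ofReal hε0.le]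
    exact ENNReal.toReal_strict_mono ENNReal.ofReal_ne_top hSapprox
  have hd0 : 0 ≤ d := ENNReal.toReal_nonneg
  set sR : ℝ := (P S).toReal with hs_def
  have hPSne : P S ≠ ⊤ := (measure_ne_top P S)
  -- |a - sR| ≤ d
  have h_as : a ≤ sR + d := by
    have hsub : B ⊆ S ∪ symmDiff B S := by
      intro x hx
      by_cases hxS : x ∈ S
      · exact Or.inl hxS
      · exact Or.inr (Or.inl ⟨hx, hxS⟩)
    have := (measure_mono hsub).trans (measure_union_le (μ := P) S (symmDiff B S))
    calc a ≤ (P S + P (symmDiff B S)).toReal :=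
          ENNReal.toReal_mono (by finiteness) this
      _ = sR + d := ENNReal.toReal_add hPSne hsymm_ne
  have h_sa : sR ≤ a + d := by
    have hsub : S ⊆ B ∪ symmDiff B S := by
      intro x hx
      by_cases hxB : x ∈ B
      · exact Or.inl hxB
      · exact Or.inr (Or.inr ⟨hx, hxB⟩)
    have := (measure_mono hsub).trans (measure_union_le (μ := P) B (symmDiff B S))
    calc sR ≤ (P B + P (symmDiff B S)).toReal :=
          ENNReal.toReal_mono (by finiteness) this
      _ = a + d := ENNReal.toReal_add hPBne hsymm_ne
  -- compl measure
  have hScompl : (P Sᶜ).toReal = 1 - sR := by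
    rw [measure_compl hSmeas (measure_ne_top P S), measure_univ,
      ENNReal.toReal_sub_of_le (prob_le_one) ENNReal.one_ne_top, ENNReal.toReal_one, hs_def]
  -- key upper bound: P (S ∩ φ^{-t} Sᶜ) ≤ 2 d
  have hkey : (P (S ∩ (shiftMap^[t]) ⁻¹' Sᶜ)).toReal ≤ 2 * d := by
    have hBae : B =ᵐ[P] (shiftMap^[t]) ⁻¹' B := measure_symmDiff_eq_zero_iff.1 (hBiter t)
    have hsub : S ∩ (shiftMap^[t]) ⁻¹' Sᶜ ⊆ symmDiff B S ∪ (B ∩ (shiftMap^[t]) ⁻¹' Sᶜ) := by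
      intro x hx
      by_cases hxB : x ∈ B
      · exact Or.inr ⟨hxB, hx.2⟩
      · exact Or.inl (Or.inr ⟨hx.1, hxB⟩)
    have hBint : P (B ∩ (shiftMap^[t]) ⁻¹' Sᶜ) = P (B \ S) := by
      have : P (B ∩ (shiftMap^[t]) ⁻¹' Sᶜ)
          = P ((shiftMap^[t]) ⁻¹' B ∩ (shiftMap^[t]) ⁻¹' Sᶜ) :=
        measure_congr (hBae.inter (Filter.EventuallyEq.refl _ _))
      rw [this, ← Set.preimage_inter, hinv_iter t _ (hB.inter hSmeas.compl)]
      rfl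
    have hBdiff : P (B \ S) ≤ P (symmDiff B S) := measure_mono Set.subset_union_left
    calc (P (S ∩ (shiftMap^[t]) ⁻¹' Sᶜ)).toReal
        ≤ (P (symmDiff B S) + P (B ∩ (shiftMap^[t]) ⁻¹' Sᶜ)).toReal := by
          refine ENNReal.toReal_mono (by finiteness) ?_
          exact (measure_mono hsub).trans (measure_union_le _ _)
      _ ≤ (P (symmDiff B S) + P (symmDiff B S)).toReal := by
          refine ENNReal.toReal_mono (by finiteness) ?_
          exact add_le_add le_rfl (hBint ▸ hBdiff)
      _ = 2 * d := by rw [ENNReal.toReal_add hsymm_ne hsymm_ne, hd_def]; ring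
  -- lower bound from hcorr
  have hlow : C * (a - ε) * (b - ε) ≤ C * sR * (1 - sR) := by
    have h1' : a - ε ≤ sR := by linarith
    have h2' : b - ε ≤ 1 - sR := by simp only [hb_def]; linarith
    have hsR0 : 0 ≤ sR := ENNReal.toReal_nonneg
    have h3' : 0 ≤ a - ε := by linarith
    have h4' : 0 ≤ b - ε := by linarith
    nlinarith [mul_le_mul h1' h2' h4' hsR0, hC.le]
  rw [hScompl] at hT
  have : C * (a - ε) * (b - ε) ≤ 2 * d := le_trans hlow (hT.trans hkey)
  have h5 : a / 2 ≤ a - ε := by linarith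
  have h6 : b / 2 ≤ b - ε := by linarith
  have hfin : C * (a / 2) * (b / 2) ≤ C * (a - ε) * (b - ε) := by
    have := mul_le_mul h5 h6 (by linarith) (by linarith)
    nlinarith
  nlinarith
end

section
/- Transient fluctuation relation: let P, P̂ be probability measures on the finite set A^t with P ≪ P̂, and suppose P̂ = P ∘ θ for an involution θ : A^t → A^t with θ(supp P) = supp P. Define σ(w) = log(P(w)/P̂(w)) for w in the support of P. Then σ ∘ θ = −σ on the support of P, and for every s ∈ ℝ, P({w : σ(w) = s}) = e^{s} · P({w : σ(w) = −s}). -/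
open Classical in
theorem stmt_14 {A : Type*} [Fintype A] (t : ℕ) (P : (Fin t → A) → ℝ)
    (hnn : ∀ w, 0 ≤ P w) (hsum : ∑ w, P w = 1)
    (θ : (Fin t → A) → (Fin t → A)) (hθ : ∀ w, θ (θ w) = w)
    (hsupp : θ '' {w | P w ≠ 0} = {w | P w ≠ 0})
    (hac : ∀ w, P (θ w) = 0 → P w = 0) :
    (∀ w, P w ≠ 0 →
      Real.log (P (θ w) / P (θ (θ w))) = -Real.log (P w / P (θ w))) ∧
    ∀ s : ℝ,
      (∑ w, if P w ≠ 0 ∧ Real.log (P w / P (θ w)) = s then P w else 0) =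
        Real.exp s *
          ∑ w, if P w ≠ 0 ∧ Real.log (P w / P (θ w)) = -s then P w else 0 := by
  have hne : ∀ w, P w ≠ 0 → P (θ w) ≠ 0 := fun w h hz => h (hac w hz)
  have hne' : ∀ w, P (θ w) ≠ 0 → P w ≠ 0 := by
    intro w h hz
    exact h (hac (θ w) (by rw [hθ]; exact hz))
  have hneg : ∀ w, P w ≠ 0 →
      Real.log (P (θ w) / P (θ (θ w))) = -Real.log (P w / P (θ w)) := by
    intro w hw
    rw [hθ, ← Real.log_inv, inv_div]
  refine ⟨hneg, fun s => ?_⟩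
  have step : ∀ w, (if P w ≠ 0 ∧ Real.log (P w / P (θ w)) = s then P w else 0)
      = Real.exp s *
        (if P (θ w) ≠ 0 ∧ Real.log (P (θ w) / P (θ (θ w))) = -s then P (θ w) else 0) := by
    intro w
    by_cases hw : P w ≠ 0
    · have h1 : P (θ w) ≠ 0 := hne w hw
      rw [hneg w hw]
      by_cases hs : Real.log (P w / P (θ w)) = s
      · rw [if_pos ⟨hw, hs⟩, if_pos ⟨h1, by rw [hs]⟩]
        have hp : 0 < P w := lt_of_le_of_ne (hnn w) (Ne.symm hw)
        have hq : 0 < P (θ w) := lt_of_le_of_ne (hnn (θ w)) (Ne.symm h1)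
        have hdiv : P w / P (θ w) = Real.exp s := by
          rw [← hs, Real.exp_log (div_pos hp hq)]
        rw [div_eq_iff (ne_of_gt hq)] at hdiv
        exact hdiv
      · rw [if_neg (fun h => hs h.2), if_neg (fun h => hs (neg_injective h.2))]
        ring
    · push_neg at hw
      have h1 : P (θ w) = 0 := by
        by_contra h
        exact hne' w h hw
      rw [if_neg (by simp [hw]), if_neg (by simp [h1])]
      ring
  rw [Fintype.sum_congr _ _ step, ← Finset.mul_sum]
  congr 1
  exact Fintype.sum_bijective θ (Function.Involutive.bijective hθ) _ _ (fun w => rfl)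
end
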